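/- Let X = Σᵢ aᵢ·1_{Aᵢ} and Y = Σᵢ aᵢ·1_{Bᵢ} be simple random variables over the same finite list of values a₁,…,a_m on a complete nonatomic probability space. Then there exists a continuous path α̂ : [0,1] → L⁰(Ω,S) (Ky Fan metric) with α̂(0) = X, α̂(1) = Y, and law(α̂(t)) = (1−t)·law(X) + t·law(Y) for all t ∈ [0,1]. -/

import Mathlib

open MeasureTheory Filter Topology Set
open scoped ENNReal NNReal

/-- The Ky Fan distance between two `S`-valued random variables on `(Ω, P)`:
`inf {ε > 0 : P{ω : d(X ω, Y ω) ≥ ε} ≤ ε}`. -/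
noncomputable def kyFanDist {Ω S : Type*} [MeasurableSpace Ω] [PseudoMetricSpace S]
    (P : Measure Ω) (X Y : Ω → S) : ℝ :=
  sInf {ε : ℝ | 0 < ε ∧ (P {ω | ε ≤ dist (X ω) (Y ω)}).toReal ≤ ε}

/-- A measure is nonatomic if every set of positive measure contains a measurable
subset of strictly smaller positive measure. -/
def Nonatomic {Ω : Type*} [MeasurableSpace Ω] (P : Measure Ω) : Prop :=
  ∀ A : Set Ω, MeasurableSet A → 0 < P A →
    ∃ B ⊆ A, MeasurableSet B ∧ 0 < P B ∧ P B < P A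

/-- A finitely supported measure: a finite convex combination of Dirac measures. -/
def FinitelySupported {S : Type*} [MeasurableSpace S] (μ : Measure S) : Prop :=
  ∃ (n : ℕ) (c : Fin n → ℝ≥0∞) (a : Fin n → S),
    (∑ i, c i) = 1 ∧ μ = ∑ i, c i • Measure.dirac (a i)

/-- Continuity of a path of random variables with respect to the Ky Fan metric
(equivalently, the topology of convergence in probability). -/
def KyFanContinuousOn {Ω S : Type*} [MeasurableSpace Ω] [PseudoMetricSpace S]
    (P : Measure Ω) (γ : ℝ → Ω → S) (A : Set ℝ) : Prop :=
  ∀ t ∈ A, ∀ ε > 0, ∃ δ > 0, ∀ s ∈ A, |s - t| < δ → kyFanDist P (γ s) (γ t) < ε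

/-- Continuity of a path of measures with respect to the Lévy–Prokhorov metric. -/
def LPContinuousOn {S : Type*} [MeasurableSpace S] [PseudoMetricSpace S]
    (α : ℝ → Measure S) (A : Set ℝ) : Prop :=
  ∀ t ∈ A, ∀ ε > 0, ∃ δ > 0, ∀ s ∈ A, |s - t| < δ → levyProkhorovDist (α s) (α t) < ε

/-- A polygonal path in the space of measures with vertices in `V`: there is a partition
`0 = t₀ < t₁ < ⋯ < t_{n+1} = 1` and vertices `μᵢ ∈ V` such that on `[tᵢ, tᵢ₊₁]` the path
is the affine interpolation of `μᵢ` and `μᵢ₊₁`. -/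
def IsPolygonalWithVertices {S : Type*} [MeasurableSpace S] (β : ℝ → Measure S)
    (V : Set (Measure S)) : Prop :=
  ∃ (n : ℕ) (t : Fin (n + 2) → ℝ) (μ : Fin (n + 2) → Measure S),
    StrictMono t ∧ t 0 = 0 ∧ t (Fin.last (n + 1)) = 1 ∧ (∀ i, μ i ∈ V) ∧
    ∀ (i : Fin (n + 1)), ∀ s ∈ Set.Icc (t i.castSucc) (t i.succ),
      β s = ENNReal.ofReal ((t i.succ - s) / (t i.succ - t i.castSucc)) • μ i.castSucc
        + ENNReal.ofReal ((s - t i.castSucc) / (t i.succ - t i.castSucc)) • μ i.succ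

section Aux
variable {Ω : Type*} [MeasurableSpace Ω]

lemma nonatomic_half {Ω : Type*} [MeasurableSpace Ω] (P : Measure Ω) [IsFiniteMeasure P]
    (hna : Nonatomic P) {E : Set Ω} (hE : MeasurableSet E) (hpos : 0 < P E) :
    ∃ D ⊆ E, MeasurableSet D ∧ 0 < P D ∧ P D ≤ P E / 2 := by
  obtain ⟨B, hBE, hBm, hB0, hBlt⟩ := hna E hE hpos
  by_cases h : P B ≤ P E / 2
  · exact ⟨B, hBE, hBm, hB0, h⟩
  · refine ⟨E \ B, diff_subset, hE.diff hBm, ?_, ?_⟩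
    · rw [measure_diff hBE hBm.nullMeasurableSet (measure_ne_top P B)]
      exact tsub_pos_of_lt hBlt
    · rw [measure_diff hBE hBm.nullMeasurableSet (measure_ne_top P B)]
      calc P E - P B ≤ P E - P E / 2 := tsub_le_tsub_left (le_of_not_ge h) _
        _ = P E / 2 := ENNReal.sub_half (measure_ne_top P E)

lemma nonatomic_small {Ω : Type*} [MeasurableSpace Ω] (P : Measure Ω) [IsProbabilityMeasure P]
    (hna : Nonatomic P) {E : Set Ω} (hE : MeasurableSet E) (hpos : 0 < P E)
    {ε : ℝ≥0∞} (hε : ε ≠ 0) :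
    ∃ D ⊆ E, MeasurableSet D ∧ 0 < P D ∧ P D ≤ ε := by
  have key : ∀ n : ℕ, ∃ D ⊆ E, MeasurableSet D ∧ 0 < P D ∧ P D ≤ P E / 2 ^ n := by
    intro n
    induction n with
    | zero => exact ⟨E, subset_rfl, hE, hpos, by simp⟩
    | succ n ih =>
      obtain ⟨D, hDE, hDm, hD0, hDle⟩ := ih
      obtain ⟨F, hFD, hFm, hF0, hFle⟩ := nonatomic_half P hna hDm hD0
      refine ⟨F, hFD.trans hDE, hFm, hF0, ?_⟩
      calc P F ≤ P D / 2 := hFle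
        _ ≤ (P E / 2 ^ n) / 2 := by gcongr
        _ = P E / 2 ^ (n + 1) := by
          rw [div_eq_mul_inv, div_eq_mul_inv, div_eq_mul_inv, mul_assoc,
            ← ENNReal.mul_inv (Or.inl (by simp)) (Or.inl (by simp)), ← pow_succ]
  obtain ⟨n, hn⟩ := ENNReal.exists_inv_two_pow_lt hε
  obtain ⟨D, hDE, hDm, hD0, hDle⟩ := key n
  refine ⟨D, hDE, hDm, hD0, hDle.trans ?_⟩
  calc P E / 2 ^ n ≤ 1 / 2 ^ n := by gcongr; exact prob_le_one
    _ = 2⁻¹ ^ n := by rw [one_div, ENNReal.inv_pow]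
    _ ≤ ε := hn.le

lemma nonatomic_exists_subset (P : Measure Ω) [IsProbabilityMeasure P]
    (hna : Nonatomic P) {E : Set Ω} (hE : MeasurableSet E) {r : ℝ≥0∞} (hr : r ≤ P E) :
    ∃ D ⊆ E, MeasurableSet D ∧ P D = r := by
  classical
  set good : Set Ω → Prop := fun D => D ⊆ E ∧ MeasurableSet D ∧ P D ≤ r with hgood
  set s : Set Ω → ℝ≥0∞ := fun D₀ => sSup (P '' {C | good C ∧ D₀ ⊆ C}) with hs
  have hstep : ∀ (n : ℕ) (D₀ : Set Ω), ∃ C, good D₀ →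
      good C ∧ D₀ ⊆ C ∧ s D₀ ≤ P C + 2⁻¹ ^ n := by
    intro n D₀
    by_cases hg : good D₀
    · by_cases h0 : s D₀ = 0
      · exact ⟨D₀, fun _ => ⟨hg, subset_rfl, by simp [h0]⟩⟩
      · have hne : s D₀ ≠ ∞ := by
          refine ne_top_of_le_ne_top (by simp : (1:ℝ≥0∞) ≠ ∞) ?_
          refine sSup_le ?_
          rintro v ⟨C, _, rfl⟩
          exact prob_le_one
        have hlt : s D₀ - 2⁻¹ ^ n < s D₀ :=
          ENNReal.sub_lt_self hne h0 (by simp)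
        obtain ⟨v, ⟨C, hC, rfl⟩, hv⟩ := lt_sSup_iff.mp hlt
        exact ⟨C, fun _ => ⟨hC.1, hC.2, tsub_le_iff_right.mp hv.le⟩⟩
    · exact ⟨D₀, fun h => absurd h hg⟩
  choose f hf using hstep
  set D : ℕ → Set Ω := fun n => Nat.rec ∅ (fun n Dn => f n Dn) n with hD
  have hD0 : good (∅ : Set Ω) := ⟨empty_subset _, MeasurableSet.empty, by simp⟩
  have hDsucc : ∀ n, D (n + 1) = f n (D n) := fun n => rfl
  have hDgood : ∀ n, good (D n) := by
    intro n
    induction n with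
    | zero => exact hD0
    | succ n ih => exact ((hf n (D n)) ih).1
  have hchain : ∀ n, D n ⊆ D (n + 1) := fun n => ((hf n (D n)) (hDgood n)).2.1
  have hsle : ∀ n, s (D n) ≤ P (D (n + 1)) + 2⁻¹ ^ n :=
    fun n => ((hf n (D n)) (hDgood n)).2.2
  have hmono : Monotone D := monotone_nat_of_le_succ hchain
  set L : Set Ω := ⋃ n, D n with hL
  have hLm : MeasurableSet L := MeasurableSet.iUnion fun n => (hDgood n).2.1
  have hLE : L ⊆ E := iUnion_subset fun n => (hDgood n).1
  have hPL : P L = ⨆ n, P (D n) := hmono.directed_le.measure_iUnion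
  have hPLr : P L ≤ r := by
    rw [hPL]; exact iSup_le fun n => (hDgood n).2.2
  rcases eq_or_lt_of_le hPLr with heq | hlt
  · exact ⟨L, hLE, hLm, heq⟩
  · exfalso
    have hrne : r ≠ ∞ := ne_top_of_le_ne_top (measure_ne_top P E) hr
    have hdiffpos : 0 < P (E \ L) := by
      rw [measure_diff hLE hLm.nullMeasurableSet (measure_ne_top P L)]
      exact tsub_pos_of_lt (lt_of_lt_of_le hlt hr)
    obtain ⟨F, hFsub, hFm, hF0, hFle⟩ := nonatomic_small P hna (hE.diff hLm) hdiffpos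
      (ε := r - P L) (tsub_pos_of_lt hlt).ne'
    have hkey : ∀ n, P (D n) + P F ≤ P L + 2⁻¹ ^ n := by
      intro n
      have hdisj : Disjoint (D n) F := by
        refine Set.disjoint_left.mpr fun ω hω hωF => ?_
        exact (hFsub hωF).2 (mem_iUnion.mpr ⟨n, hω⟩)
      have hcand : good (D n ∪ F) ∧ D n ⊆ D n ∪ F := by
        refine ⟨⟨union_subset (hDgood n).1 (hFsub.trans diff_subset),
          (hDgood n).2.1.union hFm, ?_⟩, subset_union_left⟩
        rw [measure_union hdisj hFm]
        calc P (D n) + P F ≤ P L + (r - P L) :=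
              add_le_add (le_iSup (fun n => P (D n)) n |>.trans hPL.ge) hFle
          _ = r := add_tsub_cancel_of_le hlt.le
      have h1 : P (D n ∪ F) ≤ s (D n) := le_sSup ⟨D n ∪ F, ⟨hcand.1, hcand.2⟩, rfl⟩
      have h2 : P (D n) + P F = P (D n ∪ F) := (measure_union hdisj hFm).symm
      calc P (D n) + P F = P (D n ∪ F) := h2
        _ ≤ s (D n) := h1
        _ ≤ P (D (n + 1)) + 2⁻¹ ^ n := hsle n
        _ ≤ P L + 2⁻¹ ^ n :=
            add_le_add (le_iSup (fun n => P (D n)) (n+1) |>.trans hPL.ge) le_rfl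
    have htend1 : Tendsto (fun n => P (D n) + P F) atTop (𝓝 (P L + P F)) := by
      rw [hPL]
      exact (tendsto_atTop_iSup fun i j h => measure_mono (hmono h)).add tendsto_const_nhds
    have htend2 : Tendsto (fun n => P L + 2⁻¹ ^ n) atTop (𝓝 (P L + 0)) := by
      exact tendsto_const_nhds.add
        (ENNReal.tendsto_pow_atTop_nhds_zero_of_lt_one (by norm_num))
    have hle : P L + P F ≤ P L + 0 := le_of_tendsto_of_tendsto' htend1 htend2 hkey
    have : P F ≤ 0 := (ENNReal.add_le_add_iff_left (measure_ne_top P L)).mp hle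
    exact absurd (le_antisymm this (by positivity)) hF0.ne'

end Aux

section Aux2
variable {Ω : Type*} [MeasurableSpace Ω]

/-- Invariant for the `n`-th dyadic row. -/
def DyInv (P : Measure Ω) (E : Set Ω) (n : ℕ) (g : ℕ → Set Ω) : Prop :=
  Monotone g ∧ (∀ k, g k ⊆ E) ∧ (∀ k, MeasurableSet (g k)) ∧ g 0 = ∅ ∧
    (∀ k, 2 ^ n ≤ k → g k = E) ∧
    (∀ k ≤ 2 ^ n, P (g k) = ENNReal.ofReal ((k : ℝ) * (2⁻¹ : ℝ) ^ n) * P E)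

lemma dyadic_step (P : Measure Ω) [IsProbabilityMeasure P] (hna : Nonatomic P)
    {E : Set Ω} (hE : MeasurableSet E) (n : ℕ) (g : ℕ → Set Ω) :
    ∃ g' : ℕ → Set Ω, DyInv P E n g →
      (DyInv P E (n + 1) g' ∧ ∀ k, g' (2 * k) = g k) := by
  classical
  by_cases hg : DyInv P E n g
  swap
  · exact ⟨g, fun h => absurd h hg⟩
  obtain ⟨hmono, hsub, hmeas, h0, htop, hP⟩ := hg
  -- choose the halving sets
  have hH : ∀ k, ∃ H, H ⊆ g (k + 1) \ g k ∧ MeasurableSet H ∧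
      (k + 1 ≤ 2 ^ n → P H = ENNReal.ofReal ((2⁻¹ : ℝ) ^ (n + 1)) * P E) ∧
      (2 ^ n ≤ k → H = ∅) := by
    intro k
    by_cases hk : k + 1 ≤ 2 ^ n
    · have hdm : MeasurableSet (g (k + 1) \ g k) := (hmeas (k+1)).diff (hmeas k)
      have hdiff : P (g (k + 1) \ g k) = ENNReal.ofReal ((2⁻¹ : ℝ) ^ n) * P E := by
        rw [measure_diff (hmono (Nat.le_succ k)) (hmeas k).nullMeasurableSet
          (measure_ne_top P _), hP (k+1) hk, hP k (le_trans (Nat.le_succ k) hk),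
          ← ENNReal.sub_mul (fun _ _ => measure_ne_top P E),
          ← ENNReal.ofReal_sub _ (by positivity)]
        congr 2
        push_cast
        ring
      have hle : ENNReal.ofReal ((2⁻¹ : ℝ) ^ (n + 1)) * P E ≤ P (g (k + 1) \ g k) := by
        rw [hdiff]
        refine mul_le_mul_of_nonneg_right (ENNReal.ofReal_le_ofReal ?_) (by positivity)
        rw [pow_succ]
        nlinarith [pow_pos (by norm_num : (0:ℝ) < 2⁻¹) n]
      obtain ⟨H, hHsub, hHm, hHP⟩ := nonatomic_exists_subset P hna hdm hle
      exact ⟨H, hHsub, hHm, fun _ => hHP, fun h => absurd h (by omega)⟩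
    · exact ⟨∅, empty_subset _, MeasurableSet.empty, fun h => absurd h hk, fun _ => rfl⟩
  choose H hHsub hHm hHP hHtop using hH
  refine ⟨fun j => if j % 2 = 0 then g (j / 2) else g (j / 2) ∪ H (j / 2), fun _ => ?_⟩
  have heven : ∀ k, (if (2*k) % 2 = 0 then g ((2*k) / 2) else g ((2*k) / 2) ∪ H ((2*k) / 2))
      = g k := by
    intro k
    have h1 : (2*k) % 2 = 0 := by omega
    have h2 : (2*k) / 2 = k := by omega
    simp [h1, h2]
  have hodd : ∀ k, (if (2*k+1) % 2 = 0 then g ((2*k+1) / 2) else g ((2*k+1) / 2) ∪ H ((2*k+1) / 2))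
      = g k ∪ H k := by
    intro k
    have h1 : (2*k+1) % 2 = 1 := by omega
    have h2 : (2*k+1) / 2 = k := by omega
    simp [h1, h2]
  have hdisjH : ∀ k, Disjoint (g k) (H k) :=
    fun k => (disjoint_sdiff_right).mono_right (hHsub k)
  have h2n : (2:ℕ) ^ (n+1) = 2 * 2 ^ n := by ring
  refine ⟨⟨?_, ?_, ?_, ?_, ?_, ?_⟩, heven⟩
  · -- monotone
    apply monotone_nat_of_le_succ
    intro j
    rcases Nat.even_or_odd j with ⟨k, hk⟩ | ⟨k, hk⟩
    · have hj : j = 2 * k := by omega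
      rw [hj, show 2 * k + 1 = 2 * k + 1 from rfl, heven, hodd]
      exact subset_union_left
    · have hj : j = 2 * k + 1 := by omega
      rw [hj, show 2 * k + 1 + 1 = 2 * (k + 1) from by omega, hodd, heven]
      exact union_subset (hmono (Nat.le_succ k)) ((hHsub k).trans diff_subset)
  · intro j
    dsimp only
    split
    · exact hsub _
    · exact union_subset (hsub _) ((hHsub _).trans (diff_subset.trans (hsub _)))
  · intro j
    dsimp only
    split
    · exact hmeas _
    · exact (hmeas _).union (hHm _)
  · simpa using h0
  · intro j hj
    dsimp only
    rcases Nat.even_or_odd j with ⟨k, hk⟩ | ⟨k, hk⟩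
    · have hj' : j = 2 * k := by omega
      subst hj'
      rw [heven]
      exact htop k (by omega)
    · have hj' : j = 2 * k + 1 := by omega
      subst hj'
      rw [hodd, hHtop k (by omega), union_empty]
      exact htop k (by omega)
  · intro j hj
    dsimp only
    rcases Nat.even_or_odd j with ⟨k, hk⟩ | ⟨k, hk⟩
    · have hj' : j = 2 * k := by omega
      subst hj'
      rw [heven, hP k (by omega)]
      congr 2
      push_cast
      ring
    · have hj' : j = 2 * k + 1 := by omega
      subst hj'
      have hk1 : k + 1 ≤ 2 ^ n := by omega
      rw [hodd, measure_union (hdisjH k) (hHm k), hP k (by omega), hHP k hk1,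
        ← add_mul, ← ENNReal.ofReal_add (by positivity) (by positivity)]
      congr 2
      push_cast
      ring
lemma nonatomic_monotone_family (P : Measure Ω) [IsProbabilityMeasure P]
    (hna : Nonatomic P) {E : Set Ω} (hE : MeasurableSet E) :
    ∃ C : ℝ → Set Ω, (∀ t, C t ⊆ E) ∧ (∀ t, MeasurableSet (C t)) ∧ Monotone C ∧
      C 0 = ∅ ∧ (∀ t, 1 ≤ t → C t = E) ∧
      ∀ t ∈ Set.Icc (0:ℝ) 1, P (C t) = ENNReal.ofReal t * P E := by
  classical
  choose F hF using dyadic_step P hna hE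
  set Dr : ℕ → ℕ → Set Ω := fun n => Nat.rec
    (fun k => if k = 0 then (∅ : Set Ω) else E) (fun n g => F n g) n with hDr
  have hInv0 : DyInv P E 0 (Dr 0) := by
    refine ⟨?_, ?_, ?_, ?_, ?_, ?_⟩
    · intro k k' hk
      show (if k = 0 then (∅:Set Ω) else E) ⊆ (if k' = 0 then (∅:Set Ω) else E)
      by_cases h : k = 0
      · simp only [h, if_pos]
        exact empty_subset _
      · have h' : k' ≠ 0 := by omega
        simp only [h, h', if_neg, if_false]
        exact subset_rfl
    · intro k
      show (if k = 0 then (∅:Set Ω) else E) ⊆ E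
      by_cases h : k = 0 <;> simp [h]
    · intro k
      show MeasurableSet (if k = 0 then (∅:Set Ω) else E)
      by_cases h : k = 0 <;> simp [h, hE]
    · simp [hDr]
    · intro k hk; simp [hDr, show k ≠ 0 by omega]
    · intro k hk
      interval_cases k <;> simp [hDr]
  have hInv : ∀ n, DyInv P E n (Dr n) := by
    intro n
    induction n with
    | zero => exact hInv0
    | succ n ih => exact ((hF n (Dr n)) ih).1
  have href : ∀ n k, Dr (n + 1) (2 * k) = Dr n k :=
    fun n k => ((hF n (Dr n)) (hInv n)).2 k
  set C : ℝ → Set Ω := fun t => ⋃ n, Dr n ⌊t * 2 ^ n⌋₊ with hC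
  have hmonoN : ∀ t : ℝ, Monotone (fun n => Dr n ⌊t * 2 ^ n⌋₊) := by
    intro t
    apply monotone_nat_of_le_succ
    intro n
    have key : 2 * ⌊t * 2 ^ n⌋₊ ≤ ⌊t * 2 ^ (n + 1)⌋₊ := by
      by_cases ht : 0 ≤ t
      · refine Nat.le_floor ?_
        push_cast
        have h1 : (⌊t * 2 ^ n⌋₊ : ℝ) ≤ t * 2 ^ n := Nat.floor_le (by positivity)
        have hp : (2:ℝ) ^ (n+1) = 2 * 2 ^ n := by ring
        nlinarith
      · rw [Nat.floor_of_nonpos (by nlinarith [pow_pos (by norm_num : (0:ℝ) < 2) n] : t * 2 ^ n ≤ 0)]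
        simp
    calc Dr n ⌊t * 2 ^ n⌋₊ = Dr (n+1) (2 * ⌊t * 2 ^ n⌋₊) := (href n _).symm
      _ ⊆ Dr (n+1) ⌊t * 2 ^ (n+1)⌋₊ := (hInv (n+1)).1 key
  refine ⟨C, ?_, ?_, ?_, ?_, ?_, ?_⟩
  · exact fun t => iUnion_subset fun n => (hInv n).2.1 _
  · exact fun t => MeasurableSet.iUnion fun n => (hInv n).2.2.1 _
  · intro t t' htt'
    refine iUnion_mono fun n => ?_
    exact (hInv n).1 (Nat.floor_mono (by nlinarith [pow_pos (by norm_num : (0:ℝ) < 2) n]))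
  · have : ∀ n, Dr n ⌊(0:ℝ) * 2 ^ n⌋₊ = ∅ := by
      intro n
      rw [zero_mul, Nat.floor_zero]
      exact (hInv n).2.2.2.1
    simp only [hC, this, iUnion_empty]
  · intro t ht
    have : ∀ n, Dr n ⌊t * 2 ^ n⌋₊ = E := by
      intro n
      refine (hInv n).2.2.2.2.1 _ (Nat.le_floor ?_)
      push_cast
      nlinarith [pow_pos (by norm_num : (0:ℝ) < 2) n]
    simp only [hC, this, iUnion_const]
  · rintro t ⟨ht0, ht1⟩
    have hfl : ∀ n, (⌊t * 2 ^ n⌋₊ : ℕ) ≤ 2 ^ n := by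
      intro n
      have : t * 2 ^ n ≤ (2:ℝ) ^ n := by nlinarith [pow_pos (by norm_num : (0:ℝ) < 2) n]
      calc ⌊t * 2 ^ n⌋₊ ≤ ⌊(2:ℝ) ^ n⌋₊ := Nat.floor_mono this
        _ = 2 ^ n := by
          rw [show ((2:ℝ) ^ n) = ((2 ^ n : ℕ) : ℝ) by push_cast; ring, Nat.floor_natCast]
    have hval : ∀ n, P (Dr n ⌊t * 2 ^ n⌋₊) =
        ENNReal.ofReal ((⌊t * 2 ^ n⌋₊ : ℝ) * (2⁻¹:ℝ) ^ n) * P E :=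
      fun n => (hInv n).2.2.2.2.2 _ (hfl n)
    have hPC : P (C t) = ⨆ n, P (Dr n ⌊t * 2 ^ n⌋₊) :=
      (hmonoN t).directed_le.measure_iUnion
    have hmonoP : Monotone fun n => P (Dr n ⌊t * 2 ^ n⌋₊) :=
      fun i j h => measure_mono (hmonoN t h)
    have h1 : Tendsto (fun n => P (Dr n ⌊t * 2 ^ n⌋₊)) atTop
        (𝓝 (⨆ n, P (Dr n ⌊t * 2 ^ n⌋₊))) := tendsto_atTop_iSup hmonoP
    have hreal : Tendsto (fun n => (⌊t * 2 ^ n⌋₊ : ℝ) * (2⁻¹:ℝ) ^ n) atTop (𝓝 t) := by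
      have hlow : ∀ n, t - (2⁻¹:ℝ) ^ n ≤ (⌊t * 2 ^ n⌋₊ : ℝ) * (2⁻¹:ℝ) ^ n := by
        intro n
        have h1 : t * 2 ^ n - 1 < (⌊t * 2 ^ n⌋₊ : ℝ) := Nat.sub_one_lt_floor _
        have h2 : (0:ℝ) < (2⁻¹:ℝ) ^ n := by positivity
        have h3 : ((2:ℝ) ^ n) * ((2⁻¹:ℝ) ^ n) = 1 := by
          rw [← mul_pow]; norm_num
        nlinarith
      have hhigh : ∀ n, (⌊t * 2 ^ n⌋₊ : ℝ) * (2⁻¹:ℝ) ^ n ≤ t := by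
        intro n
        have h1 : (⌊t * 2 ^ n⌋₊ : ℝ) ≤ t * 2 ^ n := Nat.floor_le (by positivity)
        have h2 : (0:ℝ) < (2⁻¹:ℝ) ^ n := by positivity
        have h3 : ((2:ℝ) ^ n) * ((2⁻¹:ℝ) ^ n) = 1 := by
          rw [← mul_pow]; norm_num
        nlinarith
      have hl : Tendsto (fun n : ℕ => t - (2⁻¹:ℝ) ^ n) atTop (𝓝 (t - 0)) :=
        tendsto_const_nhds.sub
          (tendsto_pow_atTop_nhds_zero_of_lt_one (by norm_num) (by norm_num))
      rw [sub_zero] at hl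
      exact tendsto_of_tendsto_of_tendsto_of_le_of_le hl tendsto_const_nhds hlow hhigh
    have h2 : Tendsto (fun n => P (Dr n ⌊t * 2 ^ n⌋₊)) atTop (𝓝 (ENNReal.ofReal t * P E)) := by
      have := (ENNReal.Tendsto.mul_const ((ENNReal.continuous_ofReal.tendsto t).comp hreal)
        (Or.inr (measure_ne_top P E))).congr (fun n => by rw [Function.comp_apply, ← hval n])
      exact this
    rw [hPC]
    exact tendsto_nhds_unique h1 h2

end Aux2

lemma simple_preimage {Ω : Type*} {ι S : Type*} (A : ι → Set Ω) (hAcover : (⋃ i, A i) = Set.univ)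
    (a : ι → S) (f : Ω → S) (hval : ∀ i, ∀ ω ∈ A i, f ω = a i) (s : Set S) :
    f ⁻¹' s = ⋃ i, ⋃ (_ : a i ∈ s), A i := by
  ext ω
  simp only [mem_preimage, mem_iUnion]
  constructor
  · intro h
    obtain ⟨i, hi⟩ := mem_iUnion.mp (show ω ∈ ⋃ i, A i by rw [hAcover]; trivial)
    exact ⟨i, by rwa [← hval i ω hi], hi⟩
  · rintro ⟨i, hs, hi⟩
    rwa [hval i ω hi]


/-- Given two simple random variables `X`, `Y` over the same finite list of values, on a
nonatomic probability space, there is a continuous path `α̂` from `X` to `Y` whose law at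
time `t` is the affine interpolation `(1−t)·law X + t·law Y`. -/
theorem stmt10 {Ω S : Type*} [MeasurableSpace Ω] [MeasurableSpace S] [MetricSpace S]
    [BorelSpace S] [CompleteSpace S] [TopologicalSpace.SeparableSpace S]
    (P : Measure Ω) [IsProbabilityMeasure P] (hna : Nonatomic P)
    {m : ℕ} (a : Fin m → S) (A B : Fin m → Set Ω)
    (hAm : ∀ i, MeasurableSet (A i)) (hBm : ∀ i, MeasurableSet (B i))
    (hAdisj : Pairwise (Function.onFun Disjoint A)) (hAcover : (⋃ i, A i) = Set.univ)
    (hBdisj : Pairwise (Function.onFun Disjoint B)) (hBcover : (⋃ i, B i) = Set.univ)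
    (X Y : Ω → S) (hXval : ∀ i, ∀ ω ∈ A i, X ω = a i) (hYval : ∀ i, ∀ ω ∈ B i, Y ω = a i) :
    ∃ αhat : ℝ → Ω → S,
      (∀ t ∈ Set.Icc (0 : ℝ) 1, Measurable (αhat t)) ∧
      KyFanContinuousOn P αhat (Set.Icc 0 1) ∧
      αhat 0 = X ∧ αhat 1 = Y ∧
      ∀ t ∈ Set.Icc (0 : ℝ) 1,
        P.map (αhat t) = ENNReal.ofReal (1 - t) • P.map X + ENNReal.ofReal t • P.map Y := by
  classical
  have hXmeas : Measurable X := by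
    intro s _
    rw [simple_preimage A hAcover a X hXval]
    exact MeasurableSet.iUnion fun i => MeasurableSet.iUnion fun _ => hAm i
  have hYmeas : Measurable Y := by
    intro s _
    rw [simple_preimage B hBcover a Y hYval]
    exact MeasurableSet.iUnion fun i => MeasurableSet.iUnion fun _ => hBm i
  have hcellm : ∀ i j : Fin m, MeasurableSet (A i ∩ B j) := fun i j => (hAm i).inter (hBm j)
  choose C hCsub hCm hCmono hC0 hC1 hCP using
    fun i j : Fin m => nonatomic_monotone_family P hna (hcellm i j)
  set G : ℝ → Set Ω := fun t => ⋃ i, ⋃ j, C i j t with hG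
  have hGm : ∀ t, MeasurableSet (G t) :=
    fun t => MeasurableSet.iUnion fun i => MeasurableSet.iUnion fun j => hCm i j t
  have hGmono : ∀ ⦃u v : ℝ⦄, u ≤ v → G u ⊆ G v :=
    fun u v h => iUnion_mono fun i => iUnion_mono fun j => hCmono i j h
  set αh : ℝ → Ω → S := fun t => (G t).piecewise Y X with hαh
  have hαmeas : ∀ t, Measurable (αh t) := fun t => Measurable.piecewise (hGm t) hYmeas hXmeas
  -- sum decompositions
  have sumA : ∀ V : Set Ω, MeasurableSet V → ∑ i, P (V ∩ A i) = P V := by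
    intro V hV
    have h1 : P (⋃ i, V ∩ A i) = ∑' i, P (V ∩ A i) :=
      measure_iUnion
        (fun i j hij => (hAdisj hij).mono inter_subset_right inter_subset_right)
        (fun i => hV.inter (hAm i))
    rw [← inter_iUnion, hAcover, inter_univ, tsum_fintype] at h1
    exact h1.symm
  have sumB : ∀ V : Set Ω, MeasurableSet V → ∑ j, P (V ∩ B j) = P V := by
    intro V hV
    have h1 : P (⋃ j, V ∩ B j) = ∑' j, P (V ∩ B j) :=
      measure_iUnion
        (fun i j hij => (hBdisj hij).mono inter_subset_right inter_subset_right)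
        (fun j => hV.inter (hBm j))
    rw [← inter_iUnion, hBcover, inter_univ, tsum_fintype] at h1
    exact h1.symm
  have hsplit : ∀ V : Set Ω, MeasurableSet V → P V = ∑ i, ∑ j, P (V ∩ (A i ∩ B j)) := by
    intro V hV
    rw [← sumA V hV]
    refine Finset.sum_congr rfl fun i _ => ?_
    rw [← sumB (V ∩ A i) (hV.inter (hAm i))]
    refine Finset.sum_congr rfl fun j _ => ?_
    rw [inter_assoc]
  have hone : ∑ i, ∑ j, P (A i ∩ B j) = 1 := by
    have := hsplit univ MeasurableSet.univ
    simp only [univ_inter, measure_univ] at this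
    exact this.symm
  -- difference estimate
  have hne_bound : ∀ u v : ℝ, 0 ≤ u → u ≤ v → v ≤ 1 →
      P {ω | αh u ω ≠ αh v ω} ≤ ENNReal.ofReal (v - u) := by
    intro u v hu huv hv1
    have hsub : {ω | αh u ω ≠ αh v ω} ⊆ ⋃ i, ⋃ j, (C i j v \ C i j u) := by
      intro ω hω
      by_cases hGv : ω ∈ G v
      · obtain ⟨i, hi⟩ := mem_iUnion.mp hGv
        obtain ⟨j, hj⟩ := mem_iUnion.mp hi
        have hGu : ω ∉ G u := by
          intro hGu
          refine hω ?_
          show (G u).piecewise Y X ω = (G v).piecewise Y X ω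
          rw [Set.piecewise_eq_of_mem _ _ _ hGu, Set.piecewise_eq_of_mem _ _ _ hGv]
        have hCu : ω ∉ C i j u := fun h => hGu (mem_iUnion.mpr ⟨i, mem_iUnion.mpr ⟨j, h⟩⟩)
        exact mem_iUnion.mpr ⟨i, mem_iUnion.mpr ⟨j, hj, hCu⟩⟩
      · have hGu : ω ∉ G u := fun h => hGv (hGmono huv h)
        refine absurd ?_ hω
        show (G u).piecewise Y X ω = (G v).piecewise Y X ω
        rw [Set.piecewise_eq_of_notMem _ _ _ hGu, Set.piecewise_eq_of_notMem _ _ _ hGv]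
    calc P {ω | αh u ω ≠ αh v ω} ≤ P (⋃ i, ⋃ j, (C i j v \ C i j u)) := measure_mono hsub
      _ ≤ ∑ i, ∑ j, P (C i j v \ C i j u) := by
          refine (measure_iUnion_le _).trans ?_
          rw [tsum_fintype]
          exact Finset.sum_le_sum fun i _ =>
            (measure_iUnion_le _).trans (by rw [tsum_fintype])
      _ = ∑ i, ∑ j, ENNReal.ofReal (v - u) * P (A i ∩ B j) := by
          refine Finset.sum_congr rfl fun i _ => Finset.sum_congr rfl fun j _ => ?_
          rw [measure_diff (hCmono i j huv) (hCm i j u).nullMeasurableSet (measure_ne_top P _),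
            hCP i j v ⟨hu.trans huv, hv1⟩, hCP i j u ⟨hu, huv.trans hv1⟩,
            ← ENNReal.sub_mul (fun _ _ => measure_ne_top P _),
            ← ENNReal.ofReal_sub _ hu]
      _ = ENNReal.ofReal (v - u) := by
          simp only [← Finset.mul_sum]
          rw [hone, mul_one]
  refine ⟨αh, fun t _ => hαmeas t, ?_, ?_, ?_, ?_⟩
  · -- continuity
    intro t ht ε hε
    refine ⟨ε / 2, by positivity, fun u hu hlt => ?_⟩
    have hbound : (P {ω | αh u ω ≠ αh t ω}).toReal ≤ |u - t| := by
      rcases le_total u t with h | h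
      · have h1 := hne_bound u t hu.1 h ht.2
        calc (P {ω | αh u ω ≠ αh t ω}).toReal
            ≤ (ENNReal.ofReal (t - u)).toReal :=
              ENNReal.toReal_mono ENNReal.ofReal_ne_top h1
          _ = t - u := ENNReal.toReal_ofReal (by linarith)
          _ ≤ |u - t| := by rw [abs_sub_comm]; exact le_abs_self _
      · have hset : {ω | αh u ω ≠ αh t ω} = {ω | αh t ω ≠ αh u ω} := by
          ext ω; exact ne_comm
        have h1 := hne_bound t u ht.1 h hu.2
        rw [hset]
        calc (P {ω | αh t ω ≠ αh u ω}).toReal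
            ≤ (ENNReal.ofReal (u - t)).toReal :=
              ENNReal.toReal_mono ENNReal.ofReal_ne_top h1
          _ = u - t := ENNReal.toReal_ofReal (by linarith)
          _ ≤ |u - t| := le_abs_self _
    have hky : kyFanDist P (αh u) (αh t) ≤ ε / 2 := by
      refine csInf_le ⟨0, fun x hx => hx.1.le⟩ ⟨by positivity, ?_⟩
      refine le_trans (le_trans ?_ hbound) hlt.le
      refine ENNReal.toReal_mono (measure_ne_top _ _) (measure_mono ?_)
      intro ω hω
      intro heq
      rw [Set.mem_setOf_eq, heq, dist_self] at hω
      linarith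
    linarith
  · -- αh 0 = X
    funext ω
    have hG0 : G 0 = ∅ := by
      simp only [hG]
      have : ∀ i j : Fin m, C i j 0 = ∅ := fun i j => hC0 i j
      simp [this]
    rw [hαh]
    simp only [hG0, Set.piecewise_empty]
  · -- αh 1 = Y
    funext ω
    have hG1 : G 1 = univ := by
      apply eq_univ_of_forall
      intro ω
      obtain ⟨i, hi⟩ := mem_iUnion.mp (show ω ∈ ⋃ i, A i by rw [hAcover]; trivial)
      obtain ⟨j, hj⟩ := mem_iUnion.mp (show ω ∈ ⋃ j, B j by rw [hBcover]; trivial)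
      exact mem_iUnion.mpr ⟨i, mem_iUnion.mpr ⟨j, by rw [hC1 i j 1 le_rfl]; exact ⟨hi, hj⟩⟩⟩
    rw [hαh]
    simp only [hG1, Set.piecewise_univ]
  · -- the law
    rintro t ⟨ht0, ht1⟩
    ext s hs
    rw [Measure.map_apply (hαmeas t) hs, Measure.add_apply, Measure.smul_apply,
      Measure.smul_apply, Measure.map_apply hXmeas hs, Measure.map_apply hYmeas hs,
      smul_eq_mul, smul_eq_mul]
    have hXpre : ∀ i j : Fin m, X ⁻¹' s ∩ (A i ∩ B j)
        = if a i ∈ s then A i ∩ B j else ∅ := by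
      intro i j; ext ω
      simp only [mem_inter_iff, mem_preimage]
      by_cases h : a i ∈ s
      · simp only [h, if_true, mem_inter_iff]
        constructor
        · rintro ⟨-, h2⟩; exact h2
        · rintro ⟨h1, h2⟩; exact ⟨by rwa [hXval i ω h1], h1, h2⟩
      · simp only [h, if_false, mem_empty_iff_false, iff_false, not_and]
        intro h1 h2 h3
        exact h (by rwa [hXval i ω h2] at h1)
    have hYpre : ∀ i j : Fin m, Y ⁻¹' s ∩ (A i ∩ B j)
        = if a j ∈ s then A i ∩ B j else ∅ := by
      intro i j; ext ω
      simp only [mem_inter_iff, mem_preimage]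
      by_cases h : a j ∈ s
      · simp only [h, if_true, mem_inter_iff]
        constructor
        · rintro ⟨-, h2⟩; exact h2
        · rintro ⟨h1, h2⟩; exact ⟨by rwa [hYval j ω h2], h1, h2⟩
      · simp only [h, if_false, mem_empty_iff_false, iff_false, not_and]
        intro h1 h2 h3
        exact h (by rwa [hYval j ω h3] at h1)
    have hmemG : ∀ (u : ℝ) (ω : Ω) (i j : Fin m), ω ∈ A i → ω ∈ B j →
        (ω ∈ G u ↔ ω ∈ C i j u) := by
      intro u ω i j hi hj
      constructor
      · intro hGu
        obtain ⟨i', hi'⟩ := mem_iUnion.mp hGu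
        obtain ⟨j', hj'⟩ := mem_iUnion.mp hi'
        have hii : i' = i := by
          by_contra hne
          exact Set.disjoint_left.mp (hAdisj hne) ((hCsub i' j' u hj').1) hi
        have hjj : j' = j := by
          by_contra hne
          exact Set.disjoint_left.mp (hBdisj hne) ((hCsub i' j' u hj').2) hj
        rwa [hii, hjj] at hj'
      · intro h
        exact mem_iUnion.mpr ⟨i, mem_iUnion.mpr ⟨j, h⟩⟩
    have hαpre : ∀ i j : Fin m, αh t ⁻¹' s ∩ (A i ∩ B j)
        = (if a j ∈ s then C i j t else ∅)
          ∪ (if a i ∈ s then (A i ∩ B j) \ C i j t else ∅) := by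
      intro i j; ext ω
      simp only [mem_inter_iff, mem_preimage, mem_union]
      constructor
      · rintro ⟨h1, h2, h3⟩
        by_cases hc : ω ∈ C i j t
        · have hGt : ω ∈ G t := (hmemG t ω i j h2 h3).mpr hc
          have hv : αh t ω = a j := by
            rw [hαh]
            simp only
            rw [Set.piecewise_eq_of_mem _ _ _ hGt, hYval j ω h3]
          rw [hv] at h1
          left; simp only [h1, if_true]; exact hc
        · have hGt : ω ∉ G t := fun h => hc ((hmemG t ω i j h2 h3).mp h)
          have hv : αh t ω = a i := by
            rw [hαh]
            simp only
            rw [Set.piecewise_eq_of_notMem _ _ _ hGt, hXval i ω h2]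
          rw [hv] at h1
          right; simp only [h1, if_true]; exact ⟨⟨h2, h3⟩, hc⟩
      · rintro (h | h)
        · by_cases hjs : a j ∈ s
          · rw [if_pos hjs] at h
            have hcell := hCsub i j t h
            have hGt : ω ∈ G t := (hmemG t ω i j hcell.1 hcell.2).mpr h
            refine ⟨?_, hcell⟩
            rw [hαh]
            simp only
            rw [Set.piecewise_eq_of_mem _ _ _ hGt, hYval j ω hcell.2]
            exact hjs
          · rw [if_neg hjs] at h; exact absurd h (notMem_empty ω)
        · by_cases his : a i ∈ s
          · rw [if_pos his] at h
            obtain ⟨⟨h2, h3⟩, hc⟩ := h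
            have hGt : ω ∉ G t := fun hh => hc ((hmemG t ω i j h2 h3).mp hh)
            refine ⟨?_, h2, h3⟩
            rw [hαh]
            simp only
            rw [Set.piecewise_eq_of_notMem _ _ _ hGt, hXval i ω h2]
            exact his
          · rw [if_neg his] at h; exact absurd h (notMem_empty ω)
    have hPdiff : ∀ i j : Fin m, P ((A i ∩ B j) \ C i j t)
        = ENNReal.ofReal (1 - t) * P (A i ∩ B j) := by
      intro i j
      rw [measure_diff (hCsub i j t) (hCm i j t).nullMeasurableSet (measure_ne_top P _),
        hCP i j t ⟨ht0, ht1⟩, ENNReal.ofReal_sub _ ht0, ENNReal.ofReal_one,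
        ENNReal.sub_mul (fun _ _ => measure_ne_top P _), one_mul]
    have hcellP : ∀ i j : Fin m, P (αh t ⁻¹' s ∩ (A i ∩ B j))
        = (if a j ∈ s then ENNReal.ofReal t * P (A i ∩ B j) else 0)
          + (if a i ∈ s then ENNReal.ofReal (1 - t) * P (A i ∩ B j) else 0) := by
      intro i j
      rw [hαpre i j]
      have hd : Disjoint (if a j ∈ s then C i j t else ∅)
          (if a i ∈ s then (A i ∩ B j) \ C i j t else ∅) := by
        split_ifs
        · exact disjoint_sdiff_right
        · exact disjoint_bot_right
        · exact disjoint_bot_left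
        · exact disjoint_bot_left
      have hm2 : MeasurableSet (if a i ∈ s then (A i ∩ B j) \ C i j t else ∅) := by
        split_ifs
        · exact (hcellm i j).diff (hCm i j t)
        · exact MeasurableSet.empty
      rw [measure_union hd hm2]
      congr 1
      · split_ifs
        · exact hCP i j t ⟨ht0, ht1⟩
        · exact measure_empty
      · split_ifs
        · exact hPdiff i j
        · exact measure_empty
    calc P (αh t ⁻¹' s)
        = ∑ i, ∑ j, P (αh t ⁻¹' s ∩ (A i ∩ B j)) := hsplit _ ((hαmeas t) hs)
      _ = ∑ i, ∑ j, ((if a j ∈ s then ENNReal.ofReal t * P (A i ∩ B j) else 0)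
            + (if a i ∈ s then ENNReal.ofReal (1 - t) * P (A i ∩ B j) else 0)) :=
          Finset.sum_congr rfl fun i _ => Finset.sum_congr rfl fun j _ => hcellP i j
      _ = ENNReal.ofReal (1 - t) * P (X ⁻¹' s) + ENNReal.ofReal t * P (Y ⁻¹' s) := by
          rw [hsplit (X ⁻¹' s) (hXmeas hs), hsplit (Y ⁻¹' s) (hYmeas hs),
            Finset.mul_sum, Finset.mul_sum, ← Finset.sum_add_distrib]
          refine Finset.sum_congr rfl fun i _ => ?_
          rw [Finset.mul_sum, Finset.mul_sum, ← Finset.sum_add_distrib]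
          refine Finset.sum_congr rfl fun j _ => ?_
          rw [hXpre i j, hYpre i j]
          split_ifs <;> simp [measure_empty, add_comm]
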